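/- The limit as α → +∞ of α^3 [αφ(α) - (α^2+1)Φ(-α)] / φ(α) equals -2, where φ is the standard normal density and Φ the standard normal CDF. -/

import Mathlib

open MeasureTheory Filter

/-- Standard normal probability density function. -/
noncomputable def stdNormalPDF (x : ℝ) : ℝ :=
  (Real.sqrt (2 * Real.pi))⁻¹ * Real.exp (-(x ^ 2) / 2)

/-- Standard normal cumulative distribution function. -/
noncomputable def stdNormalCDF (x : ℝ) : ℝ :=
  ∫ t in Set.Iic x, stdNormalPDF t

lemma stdNormalPDF_pos (x : ℝ) : 0 < stdNormalPDF x := by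
  unfold stdNormalPDF
  have := Real.pi_pos
  positivity

lemma stdNormalPDF_even (x : ℝ) : stdNormalPDF (-x) = stdNormalPDF x := by
  simp [stdNormalPDF]

lemma continuous_stdNormalPDF : Continuous stdNormalPDF := by
  unfold stdNormalPDF
  continuity

lemma hasDerivAt_stdNormalPDF (x : ℝ) :
    HasDerivAt stdNormalPDF (-x * stdNormalPDF x) x := by
  have h1 : HasDerivAt (fun x : ℝ => -(x ^ 2) / 2) (-x) x := by
    have := ((hasDerivAt_pow 2 x).neg).div_const 2
    refine this.congr_deriv ?_; push_cast; ring
  have h2 := (h1.exp).const_mul (Real.sqrt (2 * Real.pi))⁻¹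
  unfold stdNormalPDF
  refine h2.congr_deriv ?_
  ring

lemma stdNormalPDF_integrable : Integrable stdNormalPDF := by
  have h := (integrable_exp_neg_mul_sq (b := (1:ℝ)/2) (by norm_num)).const_mul
    (Real.sqrt (2 * Real.pi))⁻¹
  refine h.congr (Filter.Eventually.of_forall fun x => ?_)
  unfold stdNormalPDF
  ring_nf

lemma stdNormalPDF_tendsto_atBot : Tendsto stdNormalPDF atBot (nhds 0) := by
  have hsq : Tendsto (fun x : ℝ => x ^ 2) atBot atTop := by
    have := (tendsto_pow_atTop (n := 2) (two_ne_zero)).comp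
      (tendsto_abs_atBot_atTop (G := ℝ))
    refine this.congr fun x => ?_
    simp [Function.comp, sq_abs]
  have h1 : Tendsto (fun x : ℝ => -(x ^ 2) / 2) atBot atBot := by
    apply Tendsto.atBot_div_const (by norm_num)
    exact tendsto_neg_atBot_iff.2 hsq
  have h2 := (Real.tendsto_exp_atBot.comp h1).const_mul (Real.sqrt (2 * Real.pi))⁻¹
  rw [mul_zero] at h2
  exact h2.congr fun x => rfl

/-- Key FTC identity for Mills ratio bounds. -/
lemma stdNormalCDF_neg_eq (c a : ℝ) (ha : 0 < a) :
    stdNormalCDF (-a) =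
      (a⁻¹ - (a ^ 3)⁻¹ + 3 * (a ^ 5)⁻¹ - c * (a ^ 7)⁻¹) * stdNormalPDF a
        - ∫ x in Set.Iic (-a), ((15 - c) * (x ^ 6)⁻¹ - 7 * c * (x ^ 8)⁻¹) * stdNormalPDF x := by
  set F : ℝ → ℝ := fun x => (-x⁻¹ + (x ^ 3)⁻¹ - 3 * (x ^ 5)⁻¹ + c * (x ^ 7)⁻¹) * stdNormalPDF x
    with hF
  have hderiv : ∀ x ∈ Set.Iic (-a), HasDerivAt F
      ((1 + (15 - c) * (x ^ 6)⁻¹ - 7 * c * (x ^ 8)⁻¹) * stdNormalPDF x) x := by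
    intro x hx
    have hx0 : x ≠ 0 := by
      simp only [Set.mem_Iic] at hx; nlinarith
    have hp := ((((hasDerivAt_inv hx0).neg.add
        ((hasDerivAt_pow 3 x).inv (pow_ne_zero 3 hx0))).sub
        (((hasDerivAt_pow 5 x).inv (pow_ne_zero 5 hx0)).const_mul (3 : ℝ))).add
        (((hasDerivAt_pow 7 x).inv (pow_ne_zero 7 hx0)).const_mul c)).mul
        (hasDerivAt_stdNormalPDF x)
    refine hp.congr_deriv ?_
    simp only [Pi.add_apply, Pi.sub_apply, Pi.neg_apply, Pi.inv_apply]
    push_cast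
    field_simp
    ring
  have hint1 : IntegrableOn stdNormalPDF (Set.Iic (-a)) :=
    stdNormalPDF_integrable.integrableOn
  have hmono : ∀ (k : ℕ) (d : ℝ), IntegrableOn
      (fun x => d * (x ^ k)⁻¹ * stdNormalPDF x) (Set.Iic (-a)) := by
    intro k d
    have hbd : ∀ x ∈ Set.Iic (-a), ‖d * (x ^ k)⁻¹ * stdNormalPDF x‖ ≤
        |d| * (a ^ k)⁻¹ * stdNormalPDF x := by
      intro x hx
      simp only [Set.mem_Iic] at hx
      have hax : a ≤ |x| := by
        rw [abs_of_nonpos (by linarith)]; linarith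
      have h1 : a ^ k ≤ |x| ^ k := pow_le_pow_left₀ ha.le hax k
      have h2 : (|x| ^ k)⁻¹ ≤ (a ^ k)⁻¹ :=
        inv_anti₀ (by positivity) h1
      have hp := (stdNormalPDF_pos x).le
      calc ‖d * (x ^ k)⁻¹ * stdNormalPDF x‖
          = |d| * (|x| ^ k)⁻¹ * stdNormalPDF x := by
            rw [norm_mul, norm_mul, Real.norm_eq_abs, Real.norm_eq_abs, Real.norm_eq_abs,
              abs_inv, abs_pow, abs_of_nonneg hp]
        _ ≤ |d| * (a ^ k)⁻¹ * stdNormalPDF x := by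
            apply mul_le_mul_of_nonneg_right _ hp
            exact mul_le_mul_of_nonneg_left h2 (abs_nonneg d)
    refine Integrable.mono' (hint1.const_mul (|d| * (a ^ k)⁻¹)) ?_
      (Filter.eventually_of_mem (self_mem_ae_restrict measurableSet_Iic) hbd)
    exact (((measurable_id.pow_const k).inv.const_mul d).mul
      continuous_stdNormalPDF.measurable).aestronglyMeasurable
  have hrem : IntegrableOn
      (fun x => ((15 - c) * (x ^ 6)⁻¹ - 7 * c * (x ^ 8)⁻¹) * stdNormalPDF x) (Set.Iic (-a)) :=
    ((hmono 6 (15 - c)).sub (hmono 8 (7 * c))).congr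
      (Filter.Eventually.of_forall fun x => by simp only [Pi.sub_apply]; ring)
  have hF'int : IntegrableOn (fun x =>
      (1 + (15 - c) * (x ^ 6)⁻¹ - 7 * c * (x ^ 8)⁻¹) * stdNormalPDF x) (Set.Iic (-a)) :=
    (hint1.add hrem).congr (Filter.Eventually.of_forall fun x => by
      simp only [Pi.add_apply]; ring)
  have hinv : Tendsto (fun x : ℝ => x⁻¹) atBot (nhds 0) := by
    have h := ((tendsto_inv_atTop_zero (𝕜 := ℝ)).comp (tendsto_neg_atBot_atTop (G := ℝ))).neg
    rw [neg_zero] at h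
    exact h.congr fun x => by simp [Function.comp, inv_neg]
  have hk : ∀ k : ℕ, 0 < k → Tendsto (fun x : ℝ => (x ^ k)⁻¹) atBot (nhds 0) := by
    intro k hk
    have h := hinv.pow k
    rw [zero_pow hk.ne'] at h
    exact h.congr fun x => inv_pow x k
  have hp0 : Tendsto (fun x : ℝ => -x⁻¹ + (x ^ 3)⁻¹ - 3 * (x ^ 5)⁻¹ + c * (x ^ 7)⁻¹)
      atBot (nhds 0) := by
    have := ((hinv.neg.add (hk 3 (by norm_num))).sub
      ((hk 5 (by norm_num)).const_mul 3)).add ((hk 7 (by norm_num)).const_mul c)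
    simpa using this
  have hFlim : Tendsto F atBot (nhds 0) := by
    have := hp0.mul stdNormalPDF_tendsto_atBot
    simpa using this
  have hFTC := integral_Iic_of_hasDerivAt_of_tendsto' hderiv hF'int hFlim
  have heq : (∫ x in Set.Iic (-a),
        (1 + (15 - c) * (x ^ 6)⁻¹ - 7 * c * (x ^ 8)⁻¹) * stdNormalPDF x)
      = stdNormalCDF (-a)
        + ∫ x in Set.Iic (-a), ((15 - c) * (x ^ 6)⁻¹ - 7 * c * (x ^ 8)⁻¹) * stdNormalPDF x := by
    rw [stdNormalCDF, ← integral_add hint1 hrem]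
    exact integral_congr_ae (Filter.Eventually.of_forall fun x => by ring)
  rw [heq, sub_zero] at hFTC
  have hFa : F (-a) = (a⁻¹ - (a ^ 3)⁻¹ + 3 * (a ^ 5)⁻¹ - c * (a ^ 7)⁻¹) * stdNormalPDF a := by
    rw [hF]
    simp only [stdNormalPDF_even]
    simp only [inv_neg, neg_neg, Odd.neg_pow (by decide : Odd 3),
      Odd.neg_pow (by decide : Odd 5), Odd.neg_pow (by decide : Odd 7)]
    ring
  rw [hFa] at hFTC
  linarith

lemma stdNormalCDF_neg_le (a : ℝ) (ha : 0 < a) :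
    stdNormalCDF (-a) ≤ (a⁻¹ - (a ^ 3)⁻¹ + 3 * (a ^ 5)⁻¹) * stdNormalPDF a := by
  have h := stdNormalCDF_neg_eq 0 a ha
  have hnn : 0 ≤ ∫ x in Set.Iic (-a),
      ((15 - 0) * (x ^ 6)⁻¹ - 7 * 0 * (x ^ 8)⁻¹) * stdNormalPDF x := by
    apply setIntegral_nonneg measurableSet_Iic
    intro x _
    have h1 := (stdNormalPDF_pos x).le
    have h2 : (0:ℝ) ≤ (x ^ 6)⁻¹ := by positivity
    nlinarith
  have hco : (a⁻¹ - (a ^ 3)⁻¹ + 3 * (a ^ 5)⁻¹ - 0 * (a ^ 7)⁻¹)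
      = a⁻¹ - (a ^ 3)⁻¹ + 3 * (a ^ 5)⁻¹ := by ring
  rw [h, hco]
  linarith

lemma stdNormalCDF_neg_ge (a : ℝ) (ha : 0 < a) :
    (a⁻¹ - (a ^ 3)⁻¹ + 3 * (a ^ 5)⁻¹ - 15 * (a ^ 7)⁻¹) * stdNormalPDF a
      ≤ stdNormalCDF (-a) := by
  have h := stdNormalCDF_neg_eq 15 a ha
  have hnp : (∫ x in Set.Iic (-a),
      ((15 - 15) * (x ^ 6)⁻¹ - 7 * 15 * (x ^ 8)⁻¹) * stdNormalPDF x) ≤ 0 := by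
    apply setIntegral_nonpos measurableSet_Iic
    intro x _
    have h1 := (stdNormalPDF_pos x).le
    have h2 : (0:ℝ) ≤ (x ^ 8)⁻¹ := by positivity
    nlinarith
  rw [h]
  linarith

theorem mills_ratio_limit_third_order :
    Tendsto
      (fun α : ℝ =>
        α ^ 3 * (α * stdNormalPDF α - (α ^ 2 + 1) * stdNormalCDF (-α)) / stdNormalPDF α)
      atTop (nhds (-2)) := by
  have hlow : ∀ᶠ α : ℝ in atTop, -2 - 3 * (α ^ 2)⁻¹ ≤
      α ^ 3 * (α * stdNormalPDF α - (α ^ 2 + 1) * stdNormalCDF (-α)) / stdNormalPDF α := by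
    filter_upwards [eventually_gt_atTop (0:ℝ)] with α hα
    have hpdf := stdNormalPDF_pos α
    rw [le_div_iff₀ hpdf]
    have hb := stdNormalCDF_neg_le α hα
    have h1 : α ^ 3 * (α * stdNormalPDF α
        - (α ^ 2 + 1) * ((α⁻¹ - (α ^ 3)⁻¹ + 3 * (α ^ 5)⁻¹) * stdNormalPDF α))
        = (-2 - 3 * (α ^ 2)⁻¹) * stdNormalPDF α := by
      field_simp
      ring
    have h2 : (α ^ 2 + 1) * stdNormalCDF (-α)
        ≤ (α ^ 2 + 1) * ((α⁻¹ - (α ^ 3)⁻¹ + 3 * (α ^ 5)⁻¹) * stdNormalPDF α) :=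
      mul_le_mul_of_nonneg_left hb (by positivity)
    nlinarith [mul_le_mul_of_nonneg_left h2 (by positivity : (0:ℝ) ≤ α ^ 3)]
  have hup : ∀ᶠ α : ℝ in atTop,
      α ^ 3 * (α * stdNormalPDF α - (α ^ 2 + 1) * stdNormalCDF (-α)) / stdNormalPDF α
        ≤ -2 + 12 * (α ^ 2)⁻¹ + 15 * (α ^ 4)⁻¹ := by
    filter_upwards [eventually_gt_atTop (0:ℝ)] with α hα
    have hpdf := stdNormalPDF_pos α
    rw [div_le_iff₀ hpdf]
    have hb := stdNormalCDF_neg_ge α hα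
    have h1 : α ^ 3 * (α * stdNormalPDF α - (α ^ 2 + 1) *
        ((α⁻¹ - (α ^ 3)⁻¹ + 3 * (α ^ 5)⁻¹ - 15 * (α ^ 7)⁻¹) * stdNormalPDF α))
        = (-2 + 12 * (α ^ 2)⁻¹ + 15 * (α ^ 4)⁻¹) * stdNormalPDF α := by
      field_simp
      ring
    have h2 : (α ^ 2 + 1) * ((α⁻¹ - (α ^ 3)⁻¹ + 3 * (α ^ 5)⁻¹ - 15 * (α ^ 7)⁻¹) * stdNormalPDF α)
        ≤ (α ^ 2 + 1) * stdNormalCDF (-α) :=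
      mul_le_mul_of_nonneg_left hb (by positivity)
    nlinarith [mul_le_mul_of_nonneg_left h2 (by positivity : (0:ℝ) ≤ α ^ 3)]
  have hk : ∀ k : ℕ, 0 < k → Tendsto (fun α : ℝ => (α ^ k)⁻¹) atTop (nhds 0) := by
    intro k hk
    have h1 : Tendsto (fun x : ℝ => x ^ k) atTop atTop := tendsto_pow_atTop hk.ne'
    exact h1.inv_tendsto_atTop
  have hl : Tendsto (fun α : ℝ => -2 - 3 * (α ^ 2)⁻¹) atTop (nhds (-2)) := by
    have := (tendsto_const_nhds (x := (-2:ℝ)) (f := atTop)).sub ((hk 2 (by norm_num)).const_mul 3)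
    simpa using this
  have hu : Tendsto (fun α : ℝ => -2 + 12 * (α ^ 2)⁻¹ + 15 * (α ^ 4)⁻¹) atTop (nhds (-2)) := by
    have := ((tendsto_const_nhds (x := (-2:ℝ)) (f := atTop)).add
      ((hk 2 (by norm_num)).const_mul 12)).add ((hk 4 (by norm_num)).const_mul 15)
    simpa using this
  exact tendsto_of_tendsto_of_tendsto_of_le_of_le' hl hu hlow hup
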